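/- Fix ξ ∈ ℝ, let α = ξ and ν = ξ², let u be a normalized (α,ξ,ν)-eigenfunction, and let k₀(t) := ( −ξ/2 + (2/3)(ξ−t) ) u(t) + ( (2/3)(1−ξ²) + ξ(ξ−t) − (1/3)(ξ−t)² ) u'(t). Then ∫₀^∞ (C_ξ k₀)(t) u(t) dt = −3/4 + (11/4)ξ² − (19/8)ξ⁴ + ( −(37/48)ξ + (19/16)ξ³ ) u(0)². -/

import Mathlib

open MeasureTheory
open scoped ContDiff

/-- An `(α,ξ,ν)`-eigenfunction: a smooth function on `ℝ` which, together with all its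
derivatives, decays faster than any polynomial on `[0,∞)`, solves
`−u'' + ((ξ−t)² + 1)u = νu` on `[0,∞)`, and satisfies the Robin condition
`u'(0) = (α−ξ)u(0)`. -/
def IsEigen (α ξ ν : ℝ) (u : ℝ → ℝ) : Prop :=
  ContDiff ℝ (⊤ : ℕ∞) u ∧
  (∀ n k : ℕ, ∃ C : ℝ, ∀ t : ℝ, 0 ≤ t → |t| ^ k * |iteratedDeriv n u t| ≤ C) ∧
  (∀ t : ℝ, 0 ≤ t → -(deriv (deriv u) t) + ((ξ - t) ^ 2 + 1) * u t = ν * u t) ∧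
  deriv u 0 = (α - ξ) * u 0

/-- The operator `C_ξ w = 2( t·(n₀w) − ξw − w' + t²(ξ−t)w )`, where
`(n₀w)(t) = −w''(t) + ((ξ−t)² + 1)w(t)`. -/
noncomputable def Cxi (ξ : ℝ) (w : ℝ → ℝ) (t : ℝ) : ℝ :=
  2 * (t * (-(deriv (deriv w) t) + ((ξ - t) ^ 2 + 1) * w t)
    - ξ * w t - deriv w t + t ^ 2 * (ξ - t) * w t)

/-- The explicit corrector
`k₀ = (−ξ/2 + (2/3)(ξ−t))u + ((2/3)(1−ξ²) + ξ(ξ−t) − (1/3)(ξ−t)²)u'`. -/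
noncomputable def kzero (ξ : ℝ) (u : ℝ → ℝ) (t : ℝ) : ℝ :=
  (-ξ / 2 + 2 / 3 * (ξ - t)) * u t
    + (2 / 3 * (1 - ξ ^ 2) + ξ * (ξ - t) - 1 / 3 * (ξ - t) ^ 2) * deriv u t

/-! ### Auxiliary machinery -/

/-- Rapid decay on `[0,∞)`. -/
def RDecay (h : ℝ → ℝ) : Prop := ∀ k : ℕ, ∃ C : ℝ, ∀ t : ℝ, 0 ≤ t → |t| ^ k * |h t| ≤ C

namespace RDecay

lemma congr' {f g : ℝ → ℝ} (hf : RDecay f) (h : ∀ t, f t = g t) : RDecay g := by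
  intro k
  obtain ⟨C, hC⟩ := hf k
  exact ⟨C, fun t ht => by rw [← h t]; exact hC t ht⟩

lemma add {f g : ℝ → ℝ} (hf : RDecay f) (hg : RDecay g) : RDecay (fun t => f t + g t) := by
  intro k
  obtain ⟨C, hC⟩ := hf k
  obtain ⟨D, hD⟩ := hg k
  refine ⟨C + D, fun t ht => ?_⟩
  calc |t| ^ k * |f t + g t| ≤ |t| ^ k * (|f t| + |g t|) := by
        exact mul_le_mul_of_nonneg_left (abs_add_le _ _) (by positivity)
    _ = |t| ^ k * |f t| + |t| ^ k * |g t| := by ring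
    _ ≤ C + D := add_le_add (hC t ht) (hD t ht)

lemma const_mul {f : ℝ → ℝ} (hf : RDecay f) (c : ℝ) : RDecay (fun t => c * f t) := by
  intro k
  obtain ⟨C, hC⟩ := hf k
  refine ⟨|c| * C, fun t ht => ?_⟩
  have h1 : |t| ^ k * |c * f t| = |c| * (|t| ^ k * |f t|) := by rw [abs_mul]; ring
  rw [h1]
  exact mul_le_mul_of_nonneg_left (hC t ht) (abs_nonneg c)

lemma t_mul {f : ℝ → ℝ} (hf : RDecay f) : RDecay (fun t => t * f t) := by
  intro k
  obtain ⟨C, hC⟩ := hf (k + 1)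
  refine ⟨C, fun t ht => ?_⟩
  have h1 : |t| ^ k * |t * f t| = |t| ^ (k + 1) * |f t| := by rw [abs_mul, pow_succ]; ring
  rw [h1]; exact hC t ht

lemma bound {f : ℝ → ℝ} (hf : RDecay f) : ∃ C : ℝ, 0 ≤ C ∧ ∀ t : ℝ, 0 ≤ t → |f t| ≤ C := by
  obtain ⟨C, hC⟩ := hf 0
  refine ⟨max C 0, le_max_right _ _, fun t ht => ?_⟩
  have := hC t ht
  simp only [pow_zero, one_mul] at this
  exact le_trans this (le_max_left _ _)

lemma mul {f g : ℝ → ℝ} (hf : RDecay f) (hg : RDecay g) : RDecay (fun t => f t * g t) := by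
  intro k
  obtain ⟨C, hC⟩ := hf k
  obtain ⟨D, hD0, hD⟩ := hg.bound
  have hC0 : 0 ≤ C := le_trans (by positivity) (hC 0 le_rfl)
  refine ⟨C * D, fun t ht => ?_⟩
  rw [abs_mul, ← mul_assoc]
  exact mul_le_mul (hC t ht) (hD t ht) (abs_nonneg _) hC0

lemma tendsto_zero {f : ℝ → ℝ} (hf : RDecay f) : Filter.Tendsto f Filter.atTop (nhds 0) := by
  obtain ⟨C, hC⟩ := hf 1
  apply squeeze_zero_norm' (a := fun t => C * t⁻¹)
  · filter_upwards [Filter.eventually_ge_atTop (1 : ℝ)] with t ht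
    have ht0 : (0 : ℝ) < t := lt_of_lt_of_le one_pos ht
    have h := hC t ht0.le
    rw [pow_one, abs_of_pos ht0] at h
    rw [Real.norm_eq_abs]
    calc |f t| = t * |f t| * t⁻¹ := by field_simp
      _ ≤ C * t⁻¹ := mul_le_mul_of_nonneg_right h (inv_nonneg.2 ht0.le)
  · simpa using tendsto_inv_atTop_zero.const_mul C

lemma integrableOn {f : ℝ → ℝ} (hf : RDecay f) (hc : Continuous f) :
    IntegrableOn f (Set.Ioi (0 : ℝ)) := by
  obtain ⟨C0, hC0⟩ := hf 0
  obtain ⟨C2, hC2⟩ := hf 2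
  refine Integrable.mono' ((integrable_inv_one_add_sq.const_mul (C0 + C2)).integrableOn)
    hc.aestronglyMeasurable ?_
  rw [ae_restrict_iff' measurableSet_Ioi]
  refine Filter.Eventually.of_forall (fun t ht => ?_)
  have ht0 : (0 : ℝ) ≤ t := le_of_lt ht
  have h0 := hC0 t ht0
  simp only [pow_zero, one_mul] at h0
  have h2 := hC2 t ht0
  rw [sq_abs] at h2
  have hpos : (0 : ℝ) < 1 + t ^ 2 := by positivity
  rw [Real.norm_eq_abs]
  calc |f t| = |f t| * (1 + t ^ 2) * (1 + t ^ 2)⁻¹ := by field_simp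
    _ ≤ (C0 + C2) * (1 + t ^ 2)⁻¹ := by
        refine mul_le_mul_of_nonneg_right ?_ (inv_nonneg.2 hpos.le)
        nlinarith [abs_nonneg (f t)]

lemma poly5_mul {g : ℝ → ℝ} (hg : RDecay g) (c0 c1 c2 c3 c4 c5 : ℝ) :
    RDecay (fun t => (c0 + c1 * t + c2 * t ^ 2 + c3 * t ^ 3 + c4 * t ^ 4 + c5 * t ^ 5) * g t) := by
  have h1 := hg.t_mul
  have h2 := h1.t_mul
  have h3 := h2.t_mul
  have h4 := h3.t_mul
  have h5 := h4.t_mul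
  have h := (((((hg.const_mul c0).add (h1.const_mul c1)).add (h2.const_mul c2)).add
    (h3.const_mul c3)).add (h4.const_mul c4)).add (h5.const_mul c5)
  exact h.congr' (fun t => by ring)

end RDecay

/-- Derivative of a generic quintic. -/
lemma hasDerivAt_poly5 (c0 c1 c2 c3 c4 c5 t : ℝ) :
    HasDerivAt (fun x : ℝ => c0 + c1 * x + c2 * x ^ 2 + c3 * x ^ 3 + c4 * x ^ 4 + c5 * x ^ 5)
      (c1 + 2 * c2 * t + 3 * c3 * t ^ 2 + 4 * c4 * t ^ 3 + 5 * c5 * t ^ 4) t := by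
  have h := (((((hasDerivAt_const t c0).add ((hasDerivAt_id t).const_mul c1)).add
    ((hasDerivAt_pow 2 t).const_mul c2)).add ((hasDerivAt_pow 3 t).const_mul c3)).add
    ((hasDerivAt_pow 4 t).const_mul c4)).add ((hasDerivAt_pow 5 t).const_mul c5)
  refine h.congr_deriv ?_
  push_cast
  ring

/-- The primitive `G = p u² + q u u' + r u'²`. -/
noncomputable def GG (ξ : ℝ) (u : ℝ → ℝ) (x : ℝ) : ℝ :=
  (37/48*ξ - 19/16*ξ^3 + (59/48 - 121/48*ξ^2 + 19/8*ξ^4) * x + (175/48*ξ - 19/48*ξ^3) * x ^ 2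
      + (-29/48 - 79/48*ξ^2) * x ^ 3 + (-7/8*ξ) * x ^ 4 + 7/8 * x ^ 5) * (u x * u x)
    + (-23/48 - 9/16*ξ^2 + 5/12*ξ * x + 13/8 * x ^ 2 + 0 * x ^ 3 + 0 * x ^ 4 + 0 * x ^ 5)
        * (u x * deriv u x)
    + (-71/48*ξ + 19/16*ξ^3 + (23/48 + 9/16*ξ^2) * x + (-5/24*ξ) * x ^ 2 + (-13/24) * x ^ 3
        + 0 * x ^ 4 + 0 * x ^ 5) * (deriv u x * deriv u x)

/-- The reduced integrand minus `λ u²`. -/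
noncomputable def EE (ξ : ℝ) (u : ℝ → ℝ) (x : ℝ) : ℝ :=
  (3/4 - 37/12*ξ^2 + 19/8*ξ^4 + (26/3*ξ + 1/3*ξ^3) * x + (-2/3 - 19/3*ξ^2) * x ^ 2
      + (-19/3*ξ) * x ^ 3 + 6 * x ^ 4 + 0 * x ^ 5) * (u x * u x)
    + (-ξ + (20/3 + 2*ξ^2) * x + (2*ξ - 2/3*ξ^3) * x ^ 2 + (-4/3 - 4/3*ξ^2) * x ^ 3
      + 0 * x ^ 4 + 2/3 * x ^ 5) * (u x * deriv u x)

/-- For a normalized `(ξ,ξ,ξ²)`-eigenfunction `u`,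
`∫₀^∞ (C_ξ k₀) u dt = −3/4 + (11/4)ξ² − (19/8)ξ⁴ + (−(37/48)ξ + (19/16)ξ³)u(0)²`. -/
theorem Cxi_kzero_expectation
    (ξ : ℝ) (u : ℝ → ℝ) (hu : IsEigen ξ ξ (ξ ^ 2) u)
    (hnorm : ∫ t in Set.Ioi (0 : ℝ), u t ^ 2 = 1) :
    ∫ t in Set.Ioi (0 : ℝ), Cxi ξ (kzero ξ u) t * u t
      = -3 / 4 + 11 / 4 * ξ ^ 2 - 19 / 8 * ξ ^ 4
        + (-(37 / 48) * ξ + 19 / 16 * ξ ^ 3) * u 0 ^ 2 := by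
  obtain ⟨hsm, hdecay, hODE, hrobin⟩ := hu
  -- smoothness bookkeeping
  have hsm0 : ContDiff ℝ ∞ u := hsm
  have hd0 : Differentiable ℝ u := (contDiff_infty_iff_deriv.mp hsm0).1
  have hsm1 : ContDiff ℝ ∞ (deriv u) := (contDiff_infty_iff_deriv.mp hsm0).2
  have hd1 : Differentiable ℝ (deriv u) := (contDiff_infty_iff_deriv.mp hsm1).1
  have hsm2 : ContDiff ℝ ∞ (deriv (deriv u)) := (contDiff_infty_iff_deriv.mp hsm1).2
  have hd2 : Differentiable ℝ (deriv (deriv u)) := (contDiff_infty_iff_deriv.mp hsm2).1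
  have hcu : Continuous u := hd0.continuous
  have hcu1 : Continuous (deriv u) := hd1.continuous
  -- the ODE in resolved form
  have h2 : ∀ t : ℝ, 0 ≤ t → deriv (deriv u) t = (t ^ 2 - 2 * ξ * t + 1) * u t := by
    intro t ht
    linear_combination -hODE t ht
  have h3 : ∀ t : ℝ, 0 < t →
      deriv (deriv (deriv u)) t = (2 * t - 2 * ξ) * u t + (t ^ 2 - 2 * ξ * t + 1) * deriv u t := by
    intro t ht
    have heq : deriv (deriv u) =ᶠ[nhds t] (fun s => (s ^ 2 - 2 * ξ * s + 1) * u s) := by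
      filter_upwards [Ioi_mem_nhds ht] with s hs
      exact h2 s (le_of_lt hs)
    rw [show deriv (deriv (deriv u)) t = deriv (fun s => (s ^ 2 - 2 * ξ * s + 1) * u s) t from
      heq.deriv_eq]
    have hw : HasDerivAt (fun s : ℝ => s ^ 2 - 2 * ξ * s + 1) (2 * t - 2 * ξ) t := by
      refine (((hasDerivAt_pow 2 t).sub ((hasDerivAt_id t).const_mul (2 * ξ))).add_const 1).congr_deriv ?_
      push_cast
      ring
    exact (hw.mul (hd0 t).hasDerivAt).deriv
  -- Robin condition
  have hrob0 : deriv u 0 = 0 := by rw [hrobin]; ring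
  -- decay
  have hRDu : RDecay u := by
    intro k
    obtain ⟨C, hC⟩ := hdecay 0 k
    exact ⟨C, fun t ht => by simpa [iteratedDeriv_zero] using hC t ht⟩
  have hRDu1 : RDecay (deriv u) := by
    intro k
    obtain ⟨C, hC⟩ := hdecay 1 k
    exact ⟨C, fun t ht => by simpa [iteratedDeriv_one] using hC t ht⟩
  -- first derivative of k₀
  have hk1 : ∀ s : ℝ, HasDerivAt (kzero ξ u)
      ((-2)/3 * u s + ((-ξ)/6 - 4/3 * s) * deriv u s
        + (2/3 - ξ * s / 3 - s ^ 2 / 3) * deriv (deriv u) s) s := by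
    intro s
    have ha : HasDerivAt (fun x : ℝ => -ξ / 2 + 2 / 3 * (ξ - x)) ((-2)/3) s := by
      refine ((((hasDerivAt_id s).const_sub ξ).const_mul ((2:ℝ)/3)).const_add (-ξ/2)).congr_deriv ?_
      ring
    have hb : HasDerivAt (fun x : ℝ => 2 / 3 * (1 - ξ ^ 2) + ξ * (ξ - x) - 1 / 3 * (ξ - x) ^ 2)
        ((-ξ)/3 - 2/3 * s) s := by
      have hs : HasDerivAt (fun x : ℝ => ξ - x) (-1) s := (hasDerivAt_id s).const_sub ξ
      refine (((hs.const_mul ξ).const_add (2/3*(1 - ξ^2))).sub ((hs.pow 2).const_mul (1/3))).congr_deriv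
        ?_
      push_cast
      ring
    have h := (ha.mul (hd0 s).hasDerivAt).add (hb.mul (hd1 s).hasDerivAt)
    unfold kzero
    refine h.congr_deriv ?_
    ring
  have hderiv_kzero : deriv (kzero ξ u) = (fun s => (-2)/3 * u s + ((-ξ)/6 - 4/3 * s) * deriv u s
      + (2/3 - ξ * s / 3 - s ^ 2 / 3) * deriv (deriv u) s) :=
    funext fun s => (hk1 s).deriv
  -- second derivative of k₀
  have hk2 : ∀ s : ℝ, HasDerivAt (fun s => (-2)/3 * u s + ((-ξ)/6 - 4/3 * s) * deriv u s
      + (2/3 - ξ * s / 3 - s ^ 2 / 3) * deriv (deriv u) s)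
      ((-2) * deriv u s + ((-ξ)/2 - 2 * s) * deriv (deriv u) s
        + (2/3 - ξ * s / 3 - s ^ 2 / 3) * deriv (deriv (deriv u)) s) s := by
    intro s
    have hlin : HasDerivAt (fun x : ℝ => (-ξ)/6 - 4/3 * x) (-(4/3)) s := by
      refine (((hasDerivAt_id s).const_mul ((4:ℝ)/3)).const_sub ((-ξ)/6)).congr_deriv ?_
      ring
    have hquad : HasDerivAt (fun x : ℝ => 2/3 - ξ * x / 3 - x ^ 2 / 3)
        (-(ξ/3) - 2 * s / 3) s := by
      refine ((((((hasDerivAt_id s).const_mul ξ).div_const 3).const_sub (2/3)).sub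
        ((hasDerivAt_pow 2 s).div_const 3))).congr_deriv ?_
      push_cast
      ring
    have h := (((hd0 s).hasDerivAt.const_mul ((-2:ℝ)/3)).add (hlin.mul (hd1 s).hasDerivAt)).add
      (hquad.mul (hd2 s).hasDerivAt)
    refine h.congr_deriv ?_
    ring
  -- pointwise identity: the integrand equals λ u² + EE
  have lamv : ℝ := 0
  have hpt : ∀ t ∈ Set.Ioi (0:ℝ), Cxi ξ (kzero ξ u) t * u t
      = (-3/4 + 11/4 * ξ ^ 2 - 19/8 * ξ ^ 4) * u t ^ 2 + EE ξ u t := by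
    intro t ht
    have ht' : (0:ℝ) < t := ht
    have h2t := h2 t ht'.le
    have h3t := h3 t ht'
    simp only [Cxi, kzero]
    rw [hderiv_kzero, (hk2 t).deriv]
    beta_reduce
    rw [h2t, h3t]
    simp only [EE]
    ring
  -- G has derivative EE on (0,∞)
  have hGd : ∀ t ∈ Set.Ioi (0:ℝ), HasDerivAt (GG ξ u) (EE ξ u t) t := by
    intro t ht
    have ht' : (0:ℝ) < t := ht
    have hP := hasDerivAt_poly5 (37/48*ξ - 19/16*ξ^3) (59/48 - 121/48*ξ^2 + 19/8*ξ^4)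
      (175/48*ξ - 19/48*ξ^3) (-29/48 - 79/48*ξ^2) (-7/8*ξ) (7/8) t
    have hQ := hasDerivAt_poly5 (-23/48 - 9/16*ξ^2) (5/12*ξ) (13/8) 0 0 0 t
    have hR := hasDerivAt_poly5 (-71/48*ξ + 19/16*ξ^3) (23/48 + 9/16*ξ^2) (-5/24*ξ) (-13/24) 0 0 t
    have h := ((hP.mul ((hd0 t).hasDerivAt.mul (hd0 t).hasDerivAt)).add
      (hQ.mul ((hd0 t).hasDerivAt.mul (hd1 t).hasDerivAt))).add
      (hR.mul ((hd1 t).hasDerivAt.mul (hd1 t).hasDerivAt))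
    have hGfun : HasDerivAt (GG ξ u) _ t := h
    refine hGfun.congr_deriv ?_
    rw [h2 t ht'.le]
    simp only [EE, Pi.mul_apply]
    ring
  -- decay of the pieces
  have hRDuu : RDecay (fun t => u t * u t) := hRDu.mul hRDu
  have hRDuu1 : RDecay (fun t => u t * deriv u t) := hRDu.mul hRDu1
  have hRDu1u1 : RDecay (fun t => deriv u t * deriv u t) := hRDu1.mul hRDu1
  have hRDG : RDecay (GG ξ u) := by
    have h := ((hRDuu.poly5_mul (37/48*ξ - 19/16*ξ^3) (59/48 - 121/48*ξ^2 + 19/8*ξ^4)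
        (175/48*ξ - 19/48*ξ^3) (-29/48 - 79/48*ξ^2) (-7/8*ξ) (7/8)).add
      (hRDuu1.poly5_mul (-23/48 - 9/16*ξ^2) (5/12*ξ) (13/8) 0 0 0)).add
      (hRDu1u1.poly5_mul (-71/48*ξ + 19/16*ξ^3) (23/48 + 9/16*ξ^2) (-5/24*ξ) (-13/24) 0 0)
    exact h.congr' (fun t => by simp only [GG]; try ring)
  have hRDE : RDecay (EE ξ u) := by
    have h := (hRDuu.poly5_mul (3/4 - 37/12*ξ^2 + 19/8*ξ^4) (26/3*ξ + 1/3*ξ^3)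
        (-2/3 - 19/3*ξ^2) (-19/3*ξ) 6 0).add
      (hRDuu1.poly5_mul (-ξ) (20/3 + 2*ξ^2) (2*ξ - 2/3*ξ^3) (-4/3 - 4/3*ξ^2) 0 (2/3))
    exact h.congr' (fun t => by simp only [EE]; try ring)
  -- continuity
  have hcG : Continuous (GG ξ u) := by unfold GG; fun_prop
  have hcE : Continuous (EE ξ u) := by unfold EE; fun_prop
  -- improper integral of EE
  have hEint : IntegrableOn (EE ξ u) (Set.Ioi (0:ℝ)) := hRDE.integrableOn hcE
  have hGlim : Filter.Tendsto (GG ξ u) Filter.atTop (nhds 0) := hRDG.tendsto_zero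
  have hEval : ∫ t in Set.Ioi (0:ℝ), EE ξ u t = 0 - GG ξ u 0 :=
    integral_Ioi_of_hasDerivAt_of_tendsto hcG.continuousWithinAt hGd hEint hGlim
  -- integrability of u²
  have hRDu2 : RDecay (fun t => u t ^ 2) := hRDuu.congr' (fun t => by ring)
  have hIntu2 : IntegrableOn (fun t => u t ^ 2) (Set.Ioi (0:ℝ)) :=
    hRDu2.integrableOn (hcu.pow 2)
  -- put everything together
  have hsplit : ∫ t in Set.Ioi (0:ℝ), Cxi ξ (kzero ξ u) t * u t
      = ∫ t in Set.Ioi (0:ℝ),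
          ((-3/4 + 11/4 * ξ ^ 2 - 19/8 * ξ ^ 4) * u t ^ 2 + EE ξ u t) :=
    setIntegral_congr_fun measurableSet_Ioi hpt
  rw [hsplit, integral_add (hIntu2.const_mul _) hEint, integral_const_mul, hnorm, hEval]
  simp only [GG]
  rw [hrob0]
  ring
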